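/- Antithetic second-order Taylor inequality (Lemma 5.2): let d ∈ ℕ (d ≥ 1), K > 0, and let φ : ℝ^d → ℝ be twice continuously differentiable with ‖Dφ(x)‖ ≤ K and ‖D²φ(x)‖ ≤ K for all x ∈ ℝ^d. Then there exists a constant C > 0, depending only on K, such that for every probability space (Ω, ℱ, ℙ) and all measurable u, v, w : Ω → ℝ^d, E[|(φ(u)+φ(v))/2 − φ(w)|²] ≤ C·(E[‖(u+v)/2 − w‖²] + E[‖u−v‖⁴]) (all expectations interpreted in [0,∞]). -/

import Mathlib

open MeasureTheory
open scoped ENNReal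

-- pointwise Taylor lemma
lemma ptwise {d : ℕ} (K : ℝ) (hK : 0 < K) (φ : EuclideanSpace ℝ (Fin d) → ℝ)
    (hφ : ContDiff ℝ 2 φ)
    (h1 : ∀ x, ‖fderiv ℝ φ x‖ ≤ K) (h2 : ∀ x, ‖iteratedFDeriv ℝ 2 φ x‖ ≤ K)
    (u v w : EuclideanSpace ℝ (Fin d)) :
    |(φ u + φ v) / 2 - φ w| ≤ K * ‖(1/2:ℝ) • (u + v) - w‖ + (K/4) * ‖u - v‖^2 := by
  set m : EuclideanSpace ℝ (Fin d) := (1/2:ℝ) • (u + v) with hm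
  have hdiff : Differentiable ℝ φ := hφ.differentiable (by norm_num)
  -- step 1
  have step1 : |φ m - φ w| ≤ K * ‖m - w‖ := by
    have := convex_univ.norm_image_sub_le_of_norm_fderiv_le
      (f := φ) (C := K) (fun x _ => (hdiff x)) (fun x _ => h1 x)
      (Set.mem_univ w) (Set.mem_univ m)
    simpa using this
  -- second derivative bound
  have hdf : ContDiff ℝ 1 (fderiv ℝ φ) := hφ.fderiv_right (by norm_num)
  have h2' : ∀ x, ‖fderiv ℝ (fderiv ℝ φ) x‖ ≤ K := by
    intro x
    have e0 := norm_fderiv_iteratedFDeriv (𝕜 := ℝ) (f := fderiv ℝ φ) (n := 0) (x := x)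
    have e1 := norm_iteratedFDeriv_fderiv (𝕜 := ℝ) (f := φ) (n := 1) (x := x)
    have e2 : ‖fderiv ℝ (iteratedFDeriv ℝ 0 (fderiv ℝ φ)) x‖
        = ‖fderiv ℝ (fderiv ℝ φ) x‖ := by
      rw [iteratedFDeriv_zero_eq_comp, LinearIsometryEquiv.comp_fderiv]
      exact (continuousMultilinearCurryFin0 ℝ (EuclideanSpace ℝ (Fin d))
        (EuclideanSpace ℝ (Fin d) →L[ℝ] ℝ)).symm.toLinearIsometry.norm_toContinuousLinearMap_comp
    rw [e2] at e0
    rw [e0, e1]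
    exact h2 x
  -- Lipschitz of fderiv
  have hLip : ∀ x y : EuclideanSpace ℝ (Fin d),
      ‖fderiv ℝ φ x - fderiv ℝ φ y‖ ≤ K * ‖x - y‖ := by
    intro x y
    exact convex_univ.norm_image_sub_le_of_norm_fderiv_le
      (fun z _ => (hdf.differentiable (by norm_num) z)) (fun z _ => h2' z)
      (Set.mem_univ y) (Set.mem_univ x)
  -- Taylor remainder at m, toward point p
  have taylor : ∀ p : EuclideanSpace ℝ (Fin d),
      ‖φ p - φ m - (fderiv ℝ φ m) (p - m)‖ ≤ K * ‖p - m‖ * ‖p - m‖ := by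
    intro p
    refine (convex_closedBall m ‖p - m‖).norm_image_sub_le_of_norm_fderiv_le'
      (fun z _ => hdiff z) (fun z hz => ?_) ?_ ?_
    · calc ‖fderiv ℝ φ z - fderiv ℝ φ m‖ ≤ K * ‖z - m‖ := hLip z m
        _ ≤ K * ‖p - m‖ := by
          have : dist z m ≤ ‖p - m‖ := Metric.mem_closedBall.mp hz
          rw [dist_eq_norm] at this
          nlinarith [norm_nonneg (z - m)]
    · exact Metric.mem_closedBall_self (norm_nonneg _)
    · exact Metric.mem_closedBall.mpr (by rw [dist_eq_norm])
  -- combine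
  have hum : u - m = (1/2:ℝ) • (u - v) := by
    rw [hm]; module
  have hvm : v - m = -((1/2:ℝ) • (u - v)) := by
    rw [hm]; module
  have hsum : (fderiv ℝ φ m) (u - m) + (fderiv ℝ φ m) (v - m) = 0 := by
    rw [← map_add, hum, hvm]; simp
  have hu2 : ‖u - m‖ = ‖u - v‖ / 2 := by
    rw [hum, norm_smul, Real.norm_eq_abs, abs_of_pos (by norm_num : (0:ℝ) < 1/2)]; ring
  have hv2 : ‖v - m‖ = ‖u - v‖ / 2 := by
    rw [hvm, norm_neg, norm_smul, Real.norm_eq_abs, abs_of_pos (by norm_num : (0:ℝ) < 1/2)]; ring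
  have tu := taylor u
  have tv := taylor v
  rw [hu2] at tu
  rw [hv2] at tv
  have key : |(φ u + φ v) / 2 - φ m| ≤ (K/4) * ‖u - v‖^2 := by
    have : (φ u + φ v) / 2 - φ m =
        ((φ u - φ m - (fderiv ℝ φ m) (u - m)) + (φ v - φ m - (fderiv ℝ φ m) (v - m))) / 2 := by
      have hsum' : ((fderiv ℝ φ m) u - (fderiv ℝ φ m) m) + ((fderiv ℝ φ m) v - (fderiv ℝ φ m) m) = 0 := by
        rw [← map_sub, ← map_sub]; exact hsum
      field_simp
      linarith [hsum']
    rw [this]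
    rw [abs_div]
    have := abs_add_le (φ u - φ m - (fderiv ℝ φ m) (u - m)) (φ v - φ m - (fderiv ℝ φ m) (v - m))
    have nu : |φ u - φ m - (fderiv ℝ φ m) (u - m)| ≤ K * (‖u - v‖/2) * (‖u - v‖/2) := tu
    have nv : |φ v - φ m - (fderiv ℝ φ m) (v - m)| ≤ K * (‖u - v‖/2) * (‖u - v‖/2) := tv
    rw [abs_of_pos (by norm_num : (0:ℝ) < 2)]
    nlinarith
  calc |(φ u + φ v) / 2 - φ w|
      ≤ |(φ u + φ v) / 2 - φ m| + |φ m - φ w| := by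
        have := abs_sub_abs_le_abs_sub ((φ u + φ v) / 2 - φ m) (φ w - φ m)
        calc |(φ u + φ v) / 2 - φ w| = |((φ u + φ v) / 2 - φ m) + (φ m - φ w)| := by ring_nf
          _ ≤ _ := abs_add_le _ _
    _ ≤ K * ‖m - w‖ + (K/4) * ‖u - v‖^2 := by linarith
    _ = K * ‖(1/2:ℝ) • (u + v) - w‖ + (K/4) * ‖u - v‖^2 := by rw [hm]

theorem antithetic_taylor_inequality (K : ℝ) (hK : 0 < K) :
    ∃ C : ℝ, 0 < C ∧
      ∀ (d : ℕ), 1 ≤ d →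
      ∀ φ : EuclideanSpace ℝ (Fin d) → ℝ, ContDiff ℝ 2 φ →
        (∀ x, ‖fderiv ℝ φ x‖ ≤ K) →
        (∀ x, ‖iteratedFDeriv ℝ 2 φ x‖ ≤ K) →
      ∀ (Ω : Type) [MeasurableSpace Ω] (ℙ : Measure Ω) [IsProbabilityMeasure ℙ],
      ∀ u v w : Ω → EuclideanSpace ℝ (Fin d),
        Measurable u → Measurable v → Measurable w →
        (∫⁻ ω, (ENNReal.ofReal |(φ (u ω) + φ (v ω)) / 2 - φ (w ω)|) ^ (2 : ℕ) ∂ℙ)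
          ≤ ENNReal.ofReal C
            * ((∫⁻ ω, (‖(1 / 2 : ℝ) • (u ω + v ω) - w ω‖₊ : ℝ≥0∞) ^ (2 : ℕ) ∂ℙ)
              + ∫⁻ ω, (‖u ω - v ω‖₊ : ℝ≥0∞) ^ (4 : ℕ) ∂ℙ) := by
  refine ⟨2 * K ^ 2, by positivity, ?_⟩
  intro d hd φ hφ h1 h2 Ω _ ℙ _ u v w hu hv hw
  have hpt : ∀ ω, (ENNReal.ofReal |(φ (u ω) + φ (v ω)) / 2 - φ (w ω)|) ^ (2 : ℕ)
      ≤ ENNReal.ofReal (2 * K ^ 2) *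
        ((‖(1 / 2 : ℝ) • (u ω + v ω) - w ω‖₊ : ℝ≥0∞) ^ (2 : ℕ)
          + (‖u ω - v ω‖₊ : ℝ≥0∞) ^ (4 : ℕ)) := by
    intro ω
    have hab := ptwise K hK φ hφ h1 h2 (u ω) (v ω) (w ω)
    set a := |(φ (u ω) + φ (v ω)) / 2 - φ (w ω)| with ha
    set b := ‖(1 / 2 : ℝ) • (u ω + v ω) - w ω‖ with hb
    set c := ‖u ω - v ω‖ with hc
    have h0 : 0 ≤ a := abs_nonneg _
    have hsq1 : a ^ 2 ≤ (K * b + K / 4 * c ^ 2) ^ 2 := by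
      have hr : 0 ≤ K * b + K / 4 * c ^ 2 := by positivity
      nlinarith [hab, h0]
    have hsq : a ^ 2 ≤ 2 * K ^ 2 * (b ^ 2 + c ^ 4) := by
      have hc4 : (0:ℝ) ≤ c ^ 4 := by positivity
      nlinarith [hsq1, mul_nonneg (sq_nonneg K) (sq_nonneg (b - c ^ 2 / 4)),
        mul_nonneg (sq_nonneg K) hc4]
    calc (ENNReal.ofReal a) ^ (2 : ℕ) = ENNReal.ofReal (a ^ 2) := by
          rw [ENNReal.ofReal_pow (abs_nonneg _)]
      _ ≤ ENNReal.ofReal (2 * K ^ 2 * (b ^ 2 + c ^ 4)) := ENNReal.ofReal_le_ofReal hsq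
      _ = ENNReal.ofReal (2 * K ^ 2) *
            ((‖(1 / 2 : ℝ) • (u ω + v ω) - w ω‖₊ : ℝ≥0∞) ^ (2 : ℕ)
              + (‖u ω - v ω‖₊ : ℝ≥0∞) ^ (4 : ℕ)) := by
          rw [ENNReal.ofReal_mul (by positivity), ENNReal.ofReal_add (by positivity) (by positivity),
            ← enorm_eq_nnnorm, ← enorm_eq_nnnorm, ← ofReal_norm, ← ofReal_norm,
            ← ENNReal.ofReal_pow (norm_nonneg _), ← ENNReal.ofReal_pow (norm_nonneg _)]
  have hmf : Measurable fun ω => (‖(1 / 2 : ℝ) • (u ω + v ω) - w ω‖₊ : ℝ≥0∞) ^ (2 : ℕ) := by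
    have : Measurable fun ω => (1 / 2 : ℝ) • (u ω + v ω) - w ω :=
      (((hu.add hv).const_smul ((1 : ℝ) / 2)).sub hw)
    exact (this.nnnorm.coe_nnreal_ennreal).pow_const 2
  calc (∫⁻ ω, (ENNReal.ofReal |(φ (u ω) + φ (v ω)) / 2 - φ (w ω)|) ^ (2 : ℕ) ∂ℙ)
      ≤ ∫⁻ ω, ENNReal.ofReal (2 * K ^ 2) *
          ((‖(1 / 2 : ℝ) • (u ω + v ω) - w ω‖₊ : ℝ≥0∞) ^ (2 : ℕ)
            + (‖u ω - v ω‖₊ : ℝ≥0∞) ^ (4 : ℕ)) ∂ℙ := lintegral_mono hpt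
    _ = ENNReal.ofReal (2 * K ^ 2) *
          ∫⁻ ω, ((‖(1 / 2 : ℝ) • (u ω + v ω) - w ω‖₊ : ℝ≥0∞) ^ (2 : ℕ)
            + (‖u ω - v ω‖₊ : ℝ≥0∞) ^ (4 : ℕ)) ∂ℙ :=
        lintegral_const_mul' _ _ ENNReal.ofReal_ne_top
    _ = ENNReal.ofReal (2 * K ^ 2) *
          ((∫⁻ ω, (‖(1 / 2 : ℝ) • (u ω + v ω) - w ω‖₊ : ℝ≥0∞) ^ (2 : ℕ) ∂ℙ)
            + ∫⁻ ω, (‖u ω - v ω‖₊ : ℝ≥0∞) ^ (4 : ℕ) ∂ℙ) := by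
        rw [lintegral_add_left hmf]
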